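/- Let n ≥ 2 and let v be an n-dimensional unit vector of the form v = u/√2^q where u is a vector with integer entries and q ∈ ℕ is odd. Then there exist finitely many generators G₁, …, G_ℓ, each taken from the set {(-1)_[a], X_[a,b], (H⊗H)_[a,b,c,d] : a, b, c, d distinct elements of {1,…,n}} together with (when n is even) the matrix I_{n/2} ⊗ H, such that G₁ ⋯ G_ℓ v = (1/√2)(e₁ + e₂), where e₁ and e₂ are the first two standard basis vectors. -/

import Mathlib

open Matrix Complex

noncomputable section

/-- The `m`-level operator of type `W` with indices `f 0, …, f (m-1)`:
for injective `f`, its `(f j', f k')` entry is `W j' k'` and it agrees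
with the identity matrix elsewhere. -/
def levelOp {n m : ℕ} (f : Fin m → Fin n) (W : Matrix (Fin m) (Fin m) ℂ) :
    Matrix (Fin n) (Fin n) ℂ := fun j k =>
  (∑ j' : Fin m, ∑ k' : Fin m, if f j' = j ∧ f k' = k then W j' k' else 0) +
  (if j = k ∧ ∀ j' : Fin m, f j' ≠ j then 1 else 0)

/-- The NOT gate `X`. -/
def Xmat : Matrix (Fin 2) (Fin 2) ℂ := !![0, 1; 1, 0]

/-- The Hadamard gate `H`. -/
def Hmat : Matrix (Fin 2) (Fin 2) ℂ := (Real.sqrt 2 : ℂ)⁻¹ • !![1, 1; 1, -1]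

/-- The Kronecker product `H ⊗ H`, a 4×4 matrix. -/
def HHmat : Matrix (Fin 4) (Fin 4) ℂ :=
  (2 : ℂ)⁻¹ • !![1, 1, 1, 1; 1, -1, 1, -1; 1, 1, -1, -1; 1, -1, -1, 1]

/-- `G` is one of the generators `(-1)_[a]`, `X_[a,b]`, `(H⊗H)_[a,b,c,d]`
with `a, b, c, d` distinct. -/
def IsIntGen {n : ℕ} (G : Matrix (Fin n) (Fin n) ℂ) : Prop :=
  (∃ a : Fin n, G = levelOp ![a] !![-1]) ∨
  (∃ a b : Fin n, a ≠ b ∧ G = levelOp ![a, b] Xmat) ∨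
  (∃ a b c d : Fin n, a ≠ b ∧ a ≠ c ∧ a ≠ d ∧ b ≠ c ∧ b ≠ d ∧ c ≠ d ∧
    G = levelOp ![a, b, c, d] HHmat)

/-- The matrix `I_{n/2} ⊗ H` (meaningful when `n` is even): block diagonal
with `H` blocks on consecutive pairs of indices. -/
def IHmat (n : ℕ) : Matrix (Fin n) (Fin n) ℂ := fun j k =>
  if (j : ℕ) / 2 = (k : ℕ) / 2 then
    Hmat ⟨(j : ℕ) % 2, Nat.mod_lt _ (by norm_num)⟩
         ⟨(k : ℕ) % 2, Nat.mod_lt _ (by norm_num)⟩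
  else 0

/-- `G` is one of the generators `(-1)_[a]`, `X_[a,b]`, `(H⊗H)_[a,b,c,d]`,
or (when `n` is even) `I_{n/2} ⊗ H`. -/
def IsIntGenH {n : ℕ} (G : Matrix (Fin n) (Fin n) ℂ) : Prop :=
  IsIntGen G ∨ (Even n ∧ G = IHmat n)


section Helpers
open Finset
variable {n : ℕ}

lemma levelOp_mulVec_apply {n m : ℕ} (f : Fin m → Fin n) (hf : Function.Injective f)
    (W : Matrix (Fin m) (Fin m) ℂ) (x : Fin n → ℂ) (j₀ : Fin m) :
    (levelOp f W).mulVec x (f j₀) = ∑ k' : Fin m, W j₀ k' * x (f k') := by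
  unfold levelOp Matrix.mulVec dotProduct
  have h1 : ∀ k : Fin n,
      ((∑ j' : Fin m, ∑ k' : Fin m, if f j' = f j₀ ∧ f k' = k then W j' k' else 0) +
        (if f j₀ = k ∧ ∀ j' : Fin m, f j' ≠ f j₀ then 1 else 0)) * x k
      = (∑ k' : Fin m, if f k' = k then W j₀ k' else 0) * x k := by
    intro k
    congr 1
    have : (if f j₀ = k ∧ ∀ j' : Fin m, f j' ≠ f j₀ then (1:ℂ) else 0) = 0 := by
      rw [if_neg]; rintro ⟨-, h⟩; exact h j₀ rfl
    rw [this, add_zero]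
    rw [Finset.sum_eq_single j₀]
    · congr 1; ext k'; congr 1
      simp [hf.eq_iff]
    · intro b _ hb
      apply Finset.sum_eq_zero
      intro k' _
      rw [if_neg]
      rintro ⟨h, -⟩
      exact hb (hf h)
    · simp
  simp only [h1, Finset.sum_mul]
  rw [Finset.sum_comm]
  apply Finset.sum_congr rfl
  intro k' _
  rw [Finset.sum_eq_single (f k')] <;> simp +contextual [eq_comm]

lemma levelOp_mulVec_apply_notin {n m : ℕ} (f : Fin m → Fin n)
    (W : Matrix (Fin m) (Fin m) ℂ) (x : Fin n → ℂ) (j : Fin n)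
    (hj : ∀ j' : Fin m, f j' ≠ j) :
    (levelOp f W).mulVec x j = x j := by
  unfold levelOp Matrix.mulVec dotProduct
  have h1 : ∀ k : Fin n,
      ((∑ j' : Fin m, ∑ k' : Fin m, if f j' = j ∧ f k' = k then W j' k' else 0) +
        (if j = k ∧ ∀ j' : Fin m, f j' ≠ j then 1 else 0)) * x k
      = (if j = k then 1 else 0) * x k := by
    intro k
    congr 1
    have : (∑ j' : Fin m, ∑ k' : Fin m, if f j' = j ∧ f k' = k then W j' k' else 0) = 0 := by
      apply Finset.sum_eq_zero; intro j' _
      apply Finset.sum_eq_zero; intro k' _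
      rw [if_neg]; rintro ⟨h, -⟩; exact hj j' h
    rw [this, zero_add]
    simp [hj]
  simp only [h1]
  rw [Finset.sum_eq_single j] <;> simp +contextual [eq_comm]

lemma flip_mulVec {n : ℕ} (a : Fin n) (x : Fin n → ℂ) :
    (levelOp ![a] !![-1]).mulVec x = fun k => if k = a then -x a else x k := by
  funext k
  by_cases h : k = a
  · subst h
    have := levelOp_mulVec_apply ![k] (by intro i j _; fin_cases i <;> fin_cases j <;> simp_all)
      !![-1] x 0
    simpa using this
  · rw [if_neg h]
    exact levelOp_mulVec_apply_notin _ _ _ _ (by intro j'; fin_cases j' <;> simpa using Ne.symm h)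

lemma swap_mulVec {n : ℕ} (a b : Fin n) (hab : a ≠ b) (x : Fin n → ℂ) :
    (levelOp ![a, b] Xmat).mulVec x =
      fun k => if k = a then x b else if k = b then x a else x k := by
  have hf : Function.Injective ![a, b] := by
    intro i j h; fin_cases i <;> fin_cases j <;> simp_all <;> exact absurd h.symm hab
  funext k
  by_cases h1 : k = a
  · subst h1
    have := levelOp_mulVec_apply ![k, b] hf Xmat x 0
    simpa [Xmat, Fin.sum_univ_two] using this
  · by_cases h2 : k = b
    · subst h2
      have := levelOp_mulVec_apply ![a, k] hf Xmat x 1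
      simpa [Xmat, Fin.sum_univ_two, h1] using this
    · rw [if_neg h1, if_neg h2]
      exact levelOp_mulVec_apply_notin _ _ _ _
        (by intro j'; fin_cases j' <;> simp [Ne.symm h1, Ne.symm h2])


lemma HH_mulVec {n : ℕ} (a b c d : Fin n)
    (hab : a ≠ b) (hac : a ≠ c) (had : a ≠ d) (hbc : b ≠ c) (hbd : b ≠ d) (hcd : c ≠ d)
    (x : Fin n → ℂ) :
    (levelOp ![a, b, c, d] HHmat).mulVec x = fun k =>
      if k = a then (x a + x b + x c + x d) / 2
      else if k = b then (x a - x b + x c - x d) / 2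
      else if k = c then (x a + x b - x c - x d) / 2
      else if k = d then (x a - x b - x c + x d) / 2
      else x k := by
  have hf : Function.Injective ![a, b, c, d] := by
    intro i j h; fin_cases i <;> fin_cases j <;> simp_all
  have key : ∀ i : Fin 4, (levelOp ![a, b, c, d] HHmat).mulVec x (![a,b,c,d] i) =
      ∑ k' : Fin 4, HHmat i k' * x (![a,b,c,d] k') := fun i =>
    levelOp_mulVec_apply ![a,b,c,d] hf HHmat x i
  have e0 := key 0; have e1 := key 1; have e2 := key 2; have e3 := key 3
  simp only [Fin.sum_univ_four, show (![a,b,c,d] : Fin 4 → Fin n) 0 = a from rfl,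
    show (![a,b,c,d] : Fin 4 → Fin n) 1 = b from rfl,
    show (![a,b,c,d] : Fin 4 → Fin n) 2 = c from rfl,
    show (![a,b,c,d] : Fin 4 → Fin n) 3 = d from rfl] at e0 e1 e2 e3
  funext k
  by_cases h1 : k = a
  · subst h1; rw [if_pos rfl, e0]; simp [HHmat, Matrix.vecHead, Matrix.vecTail]; ring
  by_cases h2 : k = b
  · subst h2; rw [if_neg h1, if_pos rfl, e1]; simp [HHmat, Matrix.vecHead, Matrix.vecTail]; ring
  by_cases h3 : k = c
  · subst h3; rw [if_neg h1, if_neg h2, if_pos rfl, e2]; simp [HHmat, Matrix.vecHead, Matrix.vecTail]; ring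
  by_cases h4 : k = d
  · subst h4; rw [if_neg h1, if_neg h2, if_neg h3, if_pos rfl, e3]; simp [HHmat, Matrix.vecHead, Matrix.vecTail]; ring
  rw [if_neg h1, if_neg h2, if_neg h3, if_neg h4]
  exact levelOp_mulVec_apply_notin _ _ _ _
    (by intro j'; fin_cases j' <;> simp [Ne.symm h1, Ne.symm h2, Ne.symm h3, Ne.symm h4])

lemma gen_compose {n : ℕ} {x y z : Fin n → ℂ}
    (h1 : ∃ L : List (Matrix (Fin n) (Fin n) ℂ), (∀ G ∈ L, IsIntGen G) ∧ L.prod.mulVec x = y)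
    (h2 : ∃ L : List (Matrix (Fin n) (Fin n) ℂ), (∀ G ∈ L, IsIntGen G) ∧ L.prod.mulVec y = z) :
    ∃ L : List (Matrix (Fin n) (Fin n) ℂ), (∀ G ∈ L, IsIntGen G) ∧ L.prod.mulVec x = z := by
  obtain ⟨L1, hL1, e1⟩ := h1
  obtain ⟨L2, hL2, e2⟩ := h2
  refine ⟨L2 ++ L1, ?_, ?_⟩
  · intro G hG; rcases List.mem_append.mp hG with h | h
    · exact hL2 G h
    · exact hL1 G h
  · rw [List.prod_append, ← Matrix.mulVec_mulVec, e1, e2]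

lemma gen_nil {n : ℕ} (x : Fin n → ℂ) :
    ∃ L : List (Matrix (Fin n) (Fin n) ℂ), (∀ G ∈ L, IsIntGen G) ∧ L.prod.mulVec x = x :=
  ⟨[], by simp, by simp [Matrix.one_mulVec]⟩

lemma exists_flips {n : ℕ} (s : Finset (Fin n)) (x : Fin n → ℂ) :
    ∃ L : List (Matrix (Fin n) (Fin n) ℂ), (∀ G ∈ L, IsIntGen G) ∧
      L.prod.mulVec x = fun k => if k ∈ s then -x k else x k := by
  induction s using Finset.induction_on with
  | empty => simpa using gen_nil x
  | @insert a s' ha ih =>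
    obtain ⟨L, hL, hLx⟩ := ih
    refine ⟨levelOp ![a] !![-1] :: L, ?_, ?_⟩
    · intro G hG
      rcases List.mem_cons.mp hG with rfl | hG
      · exact Or.inl ⟨a, rfl⟩
      · exact hL G hG
    · rw [List.prod_cons, ← Matrix.mulVec_mulVec, hLx, flip_mulVec]
      funext k
      by_cases hk : k = a
      · subst hk; simp [ha]
      · simp [hk, Finset.mem_insert]


lemma exists_swapGen {n : ℕ} (p q : Fin n) (hpq : p ≠ q) (a b : Fin n) (c : ℂ) :
    ∃ L : List (Matrix (Fin n) (Fin n) ℂ), (∀ G ∈ L, IsIntGen G) ∧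
      L.prod.mulVec (fun k => if k = a ∨ k = b then c else 0) =
        fun k => if k = Equiv.swap p q a ∨ k = Equiv.swap p q b then c else 0 := by
  refine ⟨[levelOp ![p, q] Xmat], ?_, ?_⟩
  · intro G hG
    simp only [List.mem_singleton] at hG
    subst hG
    exact Or.inr (Or.inl ⟨p, q, hpq, rfl⟩)
  · rw [List.prod_singleton, swap_mulVec p q hpq]
    have hiff : ∀ z w : Fin n, Equiv.swap p q z = w ↔ z = Equiv.swap p q w := by
      intro z w
      constructor
      · intro h; rw [← h, Equiv.swap_apply_self]
      · intro h; rw [h, Equiv.swap_apply_self]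
    funext k
    have step : (if k = p then (if q = a ∨ q = b then c else 0)
        else if k = q then (if p = a ∨ p = b then c else 0)
        else (if k = a ∨ k = b then c else 0))
        = if Equiv.swap p q k = a ∨ Equiv.swap p q k = b then c else 0 := by
      by_cases h1 : k = p
      · subst h1; rw [if_pos rfl, Equiv.swap_apply_left]
      · by_cases h2 : k = q
        · subst h2; rw [if_neg h1, if_pos rfl, Equiv.swap_apply_right]
        · rw [if_neg h1, if_neg h2, Equiv.swap_apply_of_ne_of_ne h1 h2]
    rw [step]
    congr 1
    rw [eq_iff_iff, hiff k a, hiff k b]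

lemma sqrt2C_ne : (Real.sqrt 2 : ℂ) ≠ 0 :=
  Complex.ofReal_ne_zero.mpr (by positivity)

lemma sqrt2C_sq : (Real.sqrt 2 : ℂ) ^ 2 = 2 := by
  rw [← Complex.ofReal_pow, Real.sq_sqrt (by norm_num : (0:ℝ) ≤ 2)]
  norm_num

lemma move_pair {n : ℕ} (hn : 2 ≤ n) (a b : Fin n) (hab : a ≠ b) (c : ℂ) :
    ∃ L : List (Matrix (Fin n) (Fin n) ℂ), (∀ G ∈ L, IsIntGen G) ∧
      L.prod.mulVec (fun k => if k = a ∨ k = b then c else 0) =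
        fun k => if k = (⟨0, Nat.lt_of_lt_of_le (by norm_num) hn⟩ : Fin n) ∨ k = (⟨1, Nat.lt_of_lt_of_le (by norm_num) hn⟩ : Fin n) then c else 0 := by
  set z0 : Fin n := ⟨0, Nat.lt_of_lt_of_le (by norm_num) hn⟩ with hz0
  set z1 : Fin n := ⟨1, Nat.lt_of_lt_of_le (by norm_num) hn⟩ with hz1
  have hz01 : z0 ≠ z1 := by simp [hz0, hz1, Fin.ext_iff]
  -- stage 1: bring z0 into the pair
  have stage1 : ∃ c' : Fin n, c' ≠ z0 ∧
      ∃ L : List (Matrix (Fin n) (Fin n) ℂ), (∀ G ∈ L, IsIntGen G) ∧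
        L.prod.mulVec (fun k => if k = a ∨ k = b then c else 0) =
          fun k => if k = z0 ∨ k = c' then c else 0 := by
    by_cases h0 : a = z0
    · subst h0
      exact ⟨b, fun h => hab h.symm, gen_nil _⟩
    · by_cases h0' : b = z0
      · subst h0'
        refine ⟨a, h0, ?_⟩
        obtain ⟨L, hL, hLe⟩ := gen_nil (n := n) (fun k => if k = a ∨ k = z0 then c else 0)
        refine ⟨L, hL, ?_⟩
        rw [hLe]; funext k; exact if_congr or_comm rfl rfl
      · -- swap a z0
        obtain ⟨L, hL, hLe⟩ := exists_swapGen a z0 h0 a b c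
        refine ⟨b, h0', L, hL, ?_⟩
        rw [hLe, Equiv.swap_apply_left, Equiv.swap_apply_of_ne_of_ne (Ne.symm hab) h0']
  obtain ⟨c', hc', L1ex⟩ := stage1
  refine gen_compose L1ex ?_
  by_cases h1 : c' = z1
  · subst h1; exact gen_nil _
  · obtain ⟨L, hL, hLe⟩ := exists_swapGen c' z1 h1 z0 c' c
    refine ⟨L, hL, ?_⟩
    rw [hLe, Equiv.swap_apply_left,
      Equiv.swap_apply_of_ne_of_ne (Ne.symm hc') hz01]

lemma base_case {n : ℕ} (hn : 2 ≤ n) (u : Fin n → ℤ) (hsum : ∑ k, u k ^ 2 = 2) :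
    ∃ L : List (Matrix (Fin n) (Fin n) ℂ), (∀ G ∈ L, IsIntGen G) ∧
      L.prod.mulVec (fun k => (u k : ℂ) / (Real.sqrt 2 : ℂ) ^ 1) =
        fun k => if k = (⟨0, Nat.lt_of_lt_of_le (by norm_num) hn⟩ : Fin n) ∨ k = (⟨1, Nat.lt_of_lt_of_le (by norm_num) hn⟩ : Fin n) then
          ((Real.sqrt 2 : ℂ))⁻¹ else 0 := by
  have hle : ∀ k, u k ^ 2 ≤ 2 := by
    intro k
    rw [← hsum]
    exact Finset.single_le_sum (fun i _ => sq_nonneg (u i)) (mem_univ k)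
  have htri : ∀ k, u k = -1 ∨ u k = 0 ∨ u k = 1 := by
    intro k
    have h := hle k
    have h1 : -1 ≤ u k := by nlinarith
    have h2 : u k ≤ 1 := by nlinarith
    omega
  set S := Finset.filter (fun k => u k ≠ 0) Finset.univ with hSdef
  have hsumS : ∑ k ∈ S, u k ^ 2 = 2 := by
    rw [← hsum]
    refine Finset.sum_subset (Finset.subset_univ S) ?_
    intro x _ hx
    simp only [hSdef, mem_filter, mem_univ, true_and, not_not] at hx
    simp [hx]
  have hone : ∀ k ∈ S, u k ^ 2 = 1 := by
    intro k hk
    simp only [hSdef, mem_filter, mem_univ, true_and] at hk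
    rcases htri k with h | h | h <;> simp [h] at hk ⊢
  have hcard : S.card = 2 := by
    have : ∑ k ∈ S, u k ^ 2 = S.card • (1 : ℤ) := by
      rw [Finset.sum_congr rfl hone, Finset.sum_const]
    rw [hsumS] at this
    have : (S.card : ℤ) = 2 := by simpa using this.symm
    exact_mod_cast this
  obtain ⟨a, b, hab, hS⟩ := Finset.card_eq_two.mp hcard
  have hmem : ∀ k : Fin n, (k = a ∨ k = b) ↔ u k ≠ 0 := by
    intro k
    rw [show ((k = a ∨ k = b) ↔ k ∈ S) by rw [hS]; simp, hSdef]
    simp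
  refine gen_compose ?_ (move_pair hn a b hab ((Real.sqrt 2 : ℂ))⁻¹)
  obtain ⟨L, hL, hLe⟩ := exists_flips (Finset.filter (fun k => u k = -1) Finset.univ)
    (fun k => (u k : ℂ) / (Real.sqrt 2 : ℂ) ^ 1)
  refine ⟨L, hL, ?_⟩
  rw [hLe]
  funext k
  simp only [mem_filter, mem_univ, true_and, pow_one]
  by_cases hk : k = a ∨ k = b
  · rw [if_pos hk]
    have hne := (hmem k).mp hk
    rcases htri k with h | h | h
    · rw [if_pos h, h]
      push_cast
      rw [neg_div, neg_neg, one_div]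
    · exact absurd h hne
    · rw [if_neg (by omega), h]
      push_cast
      rw [one_div]
  · rw [if_neg hk]
    have h0 : u k = 0 := by
      by_contra h
      exact hk ((hmem k).mpr h)
    rw [if_neg (by omega), h0]
    push_cast
    rw [zero_div]

lemma four_dvd_card_odd {n : ℕ} (u : Fin n → ℤ) (q : ℕ) (hq : 2 ≤ q)
    (hsum : ∑ k, u k ^ 2 = 2 ^ q) :
    4 ∣ (Finset.filter (fun k => Odd (u k)) Finset.univ).card := by
  classical
  have hterm : ∀ k : Fin n, (4 : ℤ) ∣ (u k ^ 2 - if Odd (u k) then 1 else 0) := by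
    intro k
    by_cases h : Odd (u k)
    · rw [if_pos h]
      obtain ⟨m, hm⟩ := h
      rw [hm]
      ring_nf
      omega
    · rw [if_neg h]
      obtain ⟨m, hm⟩ := Int.not_odd_iff_even.mp h
      rw [hm]
      ring_nf
      omega
  have hdvd : (4 : ℤ) ∣ ∑ k, (u k ^ 2 - if Odd (u k) then 1 else 0) :=
    Finset.dvd_sum (fun k _ => hterm k)
  rw [Finset.sum_sub_distrib, hsum] at hdvd
  have hcount : (∑ k : Fin n, if Odd (u k) then (1 : ℤ) else 0)
      = ((Finset.filter (fun k => Odd (u k)) Finset.univ).card : ℤ) := by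
    simp [Finset.sum_boole]
  rw [hcount] at hdvd
  have h2q : (4 : ℤ) ∣ 2 ^ q := by
    have : (2 : ℤ) ^ 2 ∣ 2 ^ q := pow_dvd_pow 2 hq
    simpa using this
  have : (4 : ℤ) ∣ ((Finset.filter (fun k => Odd (u k)) Finset.univ).card : ℤ) := by
    have := dvd_sub h2q hdvd
    simpa using this
  exact_mod_cast this

lemma hh_step {n : ℕ} (q : ℕ) (u : Fin n → ℤ) (a b c d : Fin n)
    (hab : a ≠ b) (hac : a ≠ c) (had : a ≠ d) (hbc : b ≠ c) (hbd : b ≠ d) (hcd : c ≠ d)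
    (ha : Odd (u a)) (hb : Odd (u b)) (hc : Odd (u c)) (hd : Odd (u d)) :
    ∃ u' : Fin n → ℤ,
      (∑ k, u' k ^ 2 = ∑ k, u k ^ 2) ∧
      (Finset.filter (fun k => Odd (u' k)) Finset.univ =
        (Finset.filter (fun k => Odd (u k)) Finset.univ) \ {a, b, c, d}) ∧
      ∃ L : List (Matrix (Fin n) (Fin n) ℂ), (∀ G ∈ L, IsIntGen G) ∧
        L.prod.mulVec (fun k => (u k : ℂ) / (Real.sqrt 2 : ℂ) ^ q)
          = fun k => (u' k : ℂ) / (Real.sqrt 2 : ℂ) ^ q := by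
  classical
  set P : Fin n → Prop := fun k => (k = a ∨ k = b ∨ k = c ∨ k = d) ∧ u k % 4 = 3 with hP
  set w : Fin n → ℤ := fun k => if P k then -u k else u k with hw
  have hwP : ∀ k, P k → w k = -u k := by
    intro k h; simp only [hw]; rw [if_pos h]
  have hwnP : ∀ k, ¬ P k → w k = u k := by
    intro k h; simp only [hw]; rw [if_neg h]
  have hwu : ∀ k, w k = u k ∨ w k = -u k := by
    intro k; by_cases h : P k
    · exact Or.inr (hwP k h)
    · exact Or.inl (hwnP k h)
  have hw2 : ∀ k, w k ^ 2 = u k ^ 2 := by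
    intro k; rcases hwu k with h | h <;> rw [h] <;> ring
  have hres : ∀ k, (k = a ∨ k = b ∨ k = c ∨ k = d) → w k % 4 = 1 := by
    intro k hk
    have hodd : Odd (u k) := by rcases hk with rfl | rfl | rfl | rfl <;> assumption
    have h2 := Int.odd_iff.mp hodd
    by_cases h3 : u k % 4 = 3
    · have : w k = -u k := hwP k ⟨hk, h3⟩
      omega
    · have : w k = u k := hwnP k (fun hpk => h3 hpk.2)
      omega
  have hra := hres a (Or.inl rfl)
  have hrb := hres b (Or.inr (Or.inl rfl))
  have hrc := hres c (Or.inr (Or.inr (Or.inl rfl)))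
  have hrd := hres d (Or.inr (Or.inr (Or.inr rfl)))
  set u' : Fin n → ℤ := fun k =>
    if k = a then (w a + w b + w c + w d) / 2
    else if k = b then (w a - w b + w c - w d) / 2
    else if k = c then (w a + w b - w c - w d) / 2
    else if k = d then (w a - w b - w c + w d) / 2
    else u k with hu'
  have hva : u' a = (w a + w b + w c + w d) / 2 := by simp [hu']
  have hvb : u' b = (w a - w b + w c - w d) / 2 := by simp [hu', Ne.symm hab]
  have hvc : u' c = (w a + w b - w c - w d) / 2 := by simp [hu', Ne.symm hac, Ne.symm hbc]
  have hvd : u' d = (w a - w b - w c + w d) / 2 := by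
    simp [hu', Ne.symm had, Ne.symm hbd, Ne.symm hcd]
  have hea : 2 * u' a = w a + w b + w c + w d := by rw [hva]; omega
  have heb : 2 * u' b = w a - w b + w c - w d := by rw [hvb]; omega
  have hec : 2 * u' c = w a + w b - w c - w d := by rw [hvc]; omega
  have hed : 2 * u' d = w a - w b - w c + w d := by rw [hvd]; omega
  have hEa : ¬ Odd (u' a) := by rw [Int.odd_iff]; omega
  have hEb : ¬ Odd (u' b) := by rw [Int.odd_iff]; omega
  have hEc : ¬ Odd (u' c) := by rw [Int.odd_iff]; omega
  have hEd : ¬ Odd (u' d) := by rw [Int.odd_iff]; omega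
  have hdiff : ∀ k, k ≠ a → k ≠ b → k ≠ c → k ≠ d → u' k = u k := by
    intro k h1 h2 h3 h4; simp [hu', h1, h2, h3, h4]
  refine ⟨u', ?_, ?_, ?_⟩
  · -- sum of squares preserved
    rw [← sub_eq_zero, ← Finset.sum_sub_distrib]
    have hzero : ∀ k ∈ Finset.univ, k ∉ ({a, b, c, d} : Finset (Fin n)) →
        u' k ^ 2 - u k ^ 2 = 0 := by
      intro k _ hk
      simp only [Finset.mem_insert, Finset.mem_singleton] at hk
      push_neg at hk
      rw [hdiff k hk.1 hk.2.1 hk.2.2.1 hk.2.2.2]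
      ring
    rw [← Finset.sum_subset (Finset.subset_univ ({a, b, c, d} : Finset (Fin n))) hzero]
    rw [Finset.sum_insert (by simp [hab, hac, had]),
        Finset.sum_insert (by simp [hbc, hbd]),
        Finset.sum_insert (by simp [hcd]), Finset.sum_singleton]
    have h4X : 4 * ((u' a ^ 2 - u a ^ 2) + (u' b ^ 2 - u b ^ 2) +
        (u' c ^ 2 - u c ^ 2) + (u' d ^ 2 - u d ^ 2)) = 0 := by
      linear_combination (2 * u' a + (w a + w b + w c + w d)) * hea +
        (2 * u' b + (w a - w b + w c - w d)) * heb +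
        (2 * u' c + (w a + w b - w c - w d)) * hec +
        (2 * u' d + (w a - w b - w c + w d)) * hed +
        4 * (hw2 a) + 4 * (hw2 b) + 4 * (hw2 c) + 4 * (hw2 d)
    linarith
  · -- filter equality
    ext k
    simp only [Finset.mem_filter, Finset.mem_univ, true_and, Finset.mem_sdiff,
      Finset.mem_insert, Finset.mem_singleton]
    by_cases h1 : k = a
    · rw [h1]; simp [hEa]
    by_cases h2 : k = b
    · rw [h2]; simp [hEb]
    by_cases h3 : k = c
    · rw [h3]; simp [hEc]
    by_cases h4 : k = d
    · rw [h4]; simp [hEd]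
    rw [hdiff k h1 h2 h3 h4]
    simp [h1, h2, h3, h4]
  · -- the gates
    have ht : ((Real.sqrt 2 : ℂ)) ^ q ≠ 0 := pow_ne_zero _ sqrt2C_ne
    refine gen_compose (y := fun k => (w k : ℂ) / (Real.sqrt 2 : ℂ) ^ q) ?_ ?_
    · obtain ⟨L, hL, hLe⟩ := exists_flips (Finset.filter P Finset.univ)
        (fun k => (u k : ℂ) / (Real.sqrt 2 : ℂ) ^ q)
      refine ⟨L, hL, ?_⟩
      rw [hLe]
      funext k
      simp only [Finset.mem_filter, Finset.mem_univ, true_and]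
      by_cases h : P k
      · rw [if_pos h, hwP k h]
        push_cast
        ring
      · rw [if_neg h, hwnP k h]
    · refine ⟨[levelOp ![a, b, c, d] HHmat], ?_, ?_⟩
      · intro G hG
        simp only [List.mem_singleton] at hG
        subst hG
        exact Or.inr (Or.inr ⟨a, b, c, d, hab, hac, had, hbc, hbd, hcd, rfl⟩)
      · rw [List.prod_singleton, HH_mulVec a b c d hab hac had hbc hbd hcd]
        have hca : (w a : ℂ) + w b + w c + w d = 2 * (u' a : ℂ) := by
          exact_mod_cast (congrArg (Int.cast : ℤ → ℂ) hea).symm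
        have hcb : (w a : ℂ) - w b + w c - w d = 2 * (u' b : ℂ) := by
          exact_mod_cast (congrArg (Int.cast : ℤ → ℂ) heb).symm
        have hcc : (w a : ℂ) + w b - w c - w d = 2 * (u' c : ℂ) := by
          exact_mod_cast (congrArg (Int.cast : ℤ → ℂ) hec).symm
        have hcd' : (w a : ℂ) - w b - w c + w d = 2 * (u' d : ℂ) := by
          exact_mod_cast (congrArg (Int.cast : ℤ → ℂ) hed).symm
        funext k
        by_cases h1 : k = a
        · rw [if_pos h1, h1]
          field_simp
          linear_combination hca
        by_cases h2 : k = b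
        · rw [if_neg h1, if_pos h2, h2]
          field_simp
          linear_combination hcb
        by_cases h3 : k = c
        · rw [if_neg h1, if_neg h2, if_pos h3, h3]
          field_simp
          linear_combination hcc
        by_cases h4 : k = d
        · rw [if_neg h1, if_neg h2, if_neg h3, if_pos h4, h4]
          field_simp
          linear_combination hcd'
        · rw [if_neg h1, if_neg h2, if_neg h3, if_neg h4, hdiff k h1 h2 h3 h4,
            hwnP k (fun hpk => hpk.1.elim h1 (fun h => h.elim h2 (fun h => h.elim h3 h4)))]

lemma select4 {n : ℕ} (s : Finset (Fin n)) (hs : 4 ≤ s.card) :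
    ∃ a b c d : Fin n, a ∈ s ∧ b ∈ s ∧ c ∈ s ∧ d ∈ s ∧
      a ≠ b ∧ a ≠ c ∧ a ≠ d ∧ b ≠ c ∧ b ≠ d ∧ c ≠ d := by
  obtain ⟨a, ha⟩ := Finset.card_pos.mp (by omega : 0 < s.card)
  have h1 : 3 ≤ (s.erase a).card := by
    rw [Finset.card_erase_of_mem ha]; omega
  obtain ⟨b, hb⟩ := Finset.card_pos.mp (by omega : 0 < (s.erase a).card)
  have h2 : 2 ≤ ((s.erase a).erase b).card := by
    rw [Finset.card_erase_of_mem hb]; omega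
  obtain ⟨c, hc⟩ := Finset.card_pos.mp (by omega : 0 < ((s.erase a).erase b).card)
  have h3 : 1 ≤ (((s.erase a).erase b).erase c).card := by
    rw [Finset.card_erase_of_mem hc]; omega
  obtain ⟨d, hd⟩ := Finset.card_pos.mp (by omega : 0 < (((s.erase a).erase b).erase c).card)
  rw [Finset.mem_erase] at hb
  rw [Finset.mem_erase, Finset.mem_erase] at hc
  rw [Finset.mem_erase, Finset.mem_erase, Finset.mem_erase] at hd
  exact ⟨a, b, c, d, ha, hb.2, hc.2.2, hd.2.2.2,
    (Ne.symm hb.1), (Ne.symm hc.2.1), (Ne.symm hd.2.2.1),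
    (Ne.symm hc.1), (Ne.symm hd.2.1), (Ne.symm hd.1)⟩

lemma key {n : ℕ} (hn : 2 ≤ n) : ∀ N q : ℕ, ∀ u : Fin n → ℤ, Odd q →
    (∑ k, u k ^ 2) = 2 ^ q →
    q * (n + 1) + (Finset.filter (fun k => Odd (u k)) Finset.univ).card ≤ N →
    ∃ L : List (Matrix (Fin n) (Fin n) ℂ), (∀ G ∈ L, IsIntGen G) ∧
      L.prod.mulVec (fun k => (u k : ℂ) / (Real.sqrt 2 : ℂ) ^ q) =
        fun k => if k = (⟨0, Nat.lt_of_lt_of_le (by norm_num) hn⟩ : Fin n) ∨ k = (⟨1, Nat.lt_of_lt_of_le (by norm_num) hn⟩ : Fin n) then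
          ((Real.sqrt 2 : ℂ))⁻¹ else 0 := by
  intro N
  induction N with
  | zero =>
    intro q u hq hsum hle
    exfalso
    have h1 : 1 ≤ q := by obtain ⟨m, rfl⟩ := hq; omega
    have h2 : 1 * (n + 1) ≤ q * (n + 1) := Nat.mul_le_mul h1 (le_refl (n + 1))
    omega
  | succ N ih =>
    intro q u hq hsum hle
    rcases eq_or_ne q 1 with rfl | hq1
    · exact base_case hn u (by simpa using hsum)
    · have hq3 : 3 ≤ q := by obtain ⟨m, rfl⟩ := hq; omega
      set t := (Finset.filter (fun k => Odd (u k)) Finset.univ).card with htdef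
      have htn : t ≤ n := le_trans (Finset.card_filter_le _ _) (by simp)
      rcases Nat.eq_zero_or_pos t with ht0 | htpos
      · -- all entries even: divide by two
        have hall : ∀ k, ¬ Odd (u k) := by
          intro k hk
          have hk' : k ∈ Finset.filter (fun k => Odd (u k)) Finset.univ := by
            simp [hk]
          rw [Finset.card_eq_zero.mp ht0] at hk'
          exact absurd hk' (Finset.notMem_empty k)
        set u2 : Fin n → ℤ := fun k => u k / 2 with hu2
        have h2 : ∀ k, u k = 2 * u2 k := by
          intro k
          have he := Int.even_iff.mp (Int.not_odd_iff_even.mp (hall k))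
          simp only [hu2]
          omega
        have hsum2 : ∑ k, u2 k ^ 2 = 2 ^ (q - 2) := by
          have e1 : ∑ k, u k ^ 2 = 4 * ∑ k, u2 k ^ 2 := by
            rw [Finset.mul_sum]
            refine Finset.sum_congr rfl fun k _ => ?_
            rw [h2 k]; ring
          have e2 : (2:ℤ) ^ q = 4 * 2 ^ (q - 2) := by
            have h : q - 2 + 2 = q := by omega
            calc (2:ℤ) ^ q = 2 ^ (q - 2 + 2) := by rw [h]
              _ = 4 * 2 ^ (q - 2) := by rw [pow_add]; ring
          rw [e1, e2] at hsum
          exact mul_left_cancel₀ (by norm_num) hsum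
        have hq2odd : Odd (q - 2) := by
          obtain ⟨m, rfl⟩ := hq
          exact ⟨m - 1, by omega⟩
        have hvec : (fun k => (u k : ℂ) / (Real.sqrt 2 : ℂ) ^ q)
            = fun k => (u2 k : ℂ) / (Real.sqrt 2 : ℂ) ^ (q - 2) := by
          funext k
          have hp : (Real.sqrt 2 : ℂ) ^ q = (Real.sqrt 2 : ℂ) ^ (q - 2) * 2 := by
            have h : q - 2 + 2 = q := by omega
            rw [← sqrt2C_sq, ← pow_add, h]
          have hu : (u k : ℂ) = 2 * (u2 k : ℂ) := by exact_mod_cast h2 k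
          rw [hp, hu]
          rw [mul_comm ((Real.sqrt 2 : ℂ) ^ (q - 2)) 2, mul_div_mul_left _ _ (by norm_num : (2:ℂ) ≠ 0)]
        rw [hvec]
        refine ih (q - 2) u2 hq2odd hsum2 ?_
        have hx : (Finset.filter (fun k => Odd (u2 k)) Finset.univ).card ≤ n :=
          le_trans (Finset.card_filter_le _ _) (by simp)
        have hmul : (q - 2) * (n + 1) + 2 * (n + 1) = q * (n + 1) := by
          rw [← add_mul, Nat.sub_add_cancel (by omega)]
        omega
      · -- at least four odd entries
        have h4 : 4 ∣ t := four_dvd_card_odd u q (by omega) hsum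
        have ht4 : 4 ≤ t := by omega
        obtain ⟨a, b, c, d, ha, hb, hc, hd, hab, hac, had, hbc, hbd, hcd⟩ :=
          select4 _ (htdef ▸ ht4)
        simp only [Finset.mem_filter, Finset.mem_univ, true_and] at ha hb hc hd
        obtain ⟨u', hsum', hfilt, Lex⟩ :=
          hh_step q u a b c d hab hac had hbc hbd hcd ha hb hc hd
        refine gen_compose Lex (ih q u' hq (hsum'.trans hsum) ?_)
        have hsub : ({a, b, c, d} : Finset (Fin n)) ⊆
            Finset.filter (fun k => Odd (u k)) Finset.univ := by
          intro x hx
          simp only [Finset.mem_insert, Finset.mem_singleton] at hx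
          rcases hx with rfl | rfl | rfl | rfl <;> simp [ha, hb, hc, hd]
        have hcard4 : ({a, b, c, d} : Finset (Fin n)).card = 4 := by
          rw [Finset.card_insert_of_notMem (by simp [hab, hac, had]),
            Finset.card_insert_of_notMem (by simp [hbc, hbd]),
            Finset.card_insert_of_notMem (by simp [hcd]),
            Finset.card_singleton]
        have : (Finset.filter (fun k => Odd (u' k)) Finset.univ).card = t - 4 := by
          rw [hfilt, Finset.card_sdiff_of_subset hsub, hcard4]
        omega


end Helpers

/-- A unit vector of the form `u/√2^q` with `u` an integer vector and `q` odd
can be reduced to `(1/√2)(e₁ + e₂)` using the generators `(-1)_[a]`,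
`X_[a,b]`, `(H⊗H)_[a,b,c,d]`, and (when `n` is even) `I_{n/2} ⊗ H`. -/
theorem stmt10 (n : ℕ) (hn : 2 ≤ n) (v : Fin n → ℂ)
    (hunit : ∑ k, (starRingEnd ℂ) (v k) * v k = 1)
    (u : Fin n → ℤ) (q : ℕ) (hq : Odd q)
    (hv : ∀ k, v k = (u k : ℂ) / (Real.sqrt 2 : ℂ) ^ q) :
    ∃ L : List (Matrix (Fin n) (Fin n) ℂ),
      (∀ G ∈ L, IsIntGenH G) ∧
      L.prod.mulVec v = fun k =>
        if k = (⟨0, by omega⟩ : Fin n) ∨ k = (⟨1, by omega⟩ : Fin n) then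
          ((Real.sqrt 2 : ℂ))⁻¹ else 0 := by

  have hterm : ∀ k, (starRingEnd ℂ) (v k) * v k = (u k : ℂ) ^ 2 / (2 : ℂ) ^ q := by
    intro k
    rw [hv k, map_div₀, map_intCast, map_pow, Complex.conj_ofReal]
    rw [div_mul_div_comm, ← sq, ← sq, ← pow_mul, mul_comm q 2, pow_mul, sqrt2C_sq]
  have hsumC : ∑ k, ((u k : ℂ)) ^ 2 = 2 ^ q := by
    have h1 : ∑ k, (starRingEnd ℂ) (v k) * v k = (∑ k, ((u k : ℂ)) ^ 2) / (2 : ℂ) ^ q := by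
      rw [Finset.sum_div]
      exact Finset.sum_congr rfl fun k _ => hterm k
    rw [h1] at hunit
    field_simp at hunit
    exact hunit
  have hsum : ∑ k, u k ^ 2 = 2 ^ q := by
    have : ((∑ k, u k ^ 2 : ℤ) : ℂ) = ((2 ^ q : ℤ) : ℂ) := by push_cast; exact hsumC
    exact_mod_cast this
  have hvfun : v = fun k => (u k : ℂ) / (Real.sqrt 2 : ℂ) ^ q := funext hv
  rw [hvfun]
  obtain ⟨L, hL, hLe⟩ := key hn (q * (n + 1) + n) q u hq hsum
    (by
      have : (Finset.filter (fun k => Odd (u k)) Finset.univ).card ≤ n :=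
        le_trans (Finset.card_filter_le _ _) (by simp)
      omega)
  exact ⟨L, fun G hG => Or.inl (hL G hG), hLe⟩
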